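/- Let S be an inverse semigroup with zero, let e be an idempotent with a finite cover {e₁,...,eₘ} (all eᵢ ≤ e idempotent), and let a ∈ S be arbitrary. Then either aea⁻¹ = 0, or {ae₁a⁻¹,...,aeₘa⁻¹} is a cover of the idempotent aea⁻¹. -/
import Mathlib


/-- An inverse semigroup with zero: associative multiplication, unique
generalized inverses, and a multiplicatively absorbing zero. -/
structure InvSemigroupZero (S : Type*) [Mul S] [Inv S] [Zero S] : Prop where
  mul_assoc : ∀ a b c : S, a * b * c = a * (b * c)
  mul_inv_mul : ∀ a : S, a * a⁻¹ * a = a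
  inv_mul_inv : ∀ a : S, a⁻¹ * a * a⁻¹ = a⁻¹
  inv_unique : ∀ a t : S, a * t * a = a → t * a * t = t → t = a⁻¹
  zero_mul : ∀ a : S, 0 * a = 0
  mul_zero : ∀ a : S, a * 0 = 0

def IsIdem {S : Type*} [Mul S] (e : S) : Prop := e * e = e

/-- The natural partial order: `s ≤ t` iff `s = t e` for some idempotent `e`. -/
def natLe {S : Type*} [Mul S] (s t : S) : Prop := ∃ e : S, IsIdem e ∧ s = t * e

/-- `s` and `t` are compatible iff `s⁻¹ t` and `s t⁻¹` are idempotents. -/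
def Compat {S : Type*} [Mul S] [Inv S] (s t : S) : Prop :=
  IsIdem (s⁻¹ * t) ∧ IsIdem (s * t⁻¹)

namespace ConjAux
variable {S : Type*} [Mul S] [Inv S] [Zero S]

theorem inv_invol (hS : InvSemigroupZero S) (a : S) : a⁻¹⁻¹ = a :=
  (hS.inv_unique a⁻¹ a (hS.inv_mul_inv a) (hS.mul_inv_mul a)).symm

theorem idem_inv (hS : InvSemigroupZero S) {e : S} (he : IsIdem e) : e⁻¹ = e :=
  (hS.inv_unique e e (by rw [he, he]) (by rw [he, he])).symm

theorem idem_cancel (hS : InvSemigroupZero S) {e : S} (he : IsIdem e) (x : S) :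
    e * (e * x) = e * x := by rw [← hS.mul_assoc, he]

theorem mi_cancel (hS : InvSemigroupZero S) (a x : S) :
    a * (a⁻¹ * (a * x)) = a * x := by
  rw [← hS.mul_assoc, ← hS.mul_assoc, hS.mul_inv_mul]

theorem im_cancel (hS : InvSemigroupZero S) (a x : S) :
    a⁻¹ * (a * (a⁻¹ * x)) = a⁻¹ * x := by
  rw [← hS.mul_assoc, ← hS.mul_assoc, hS.inv_mul_inv]

theorem mul_idem (hS : InvSemigroupZero S) {e f : S} (he : IsIdem e) (hf : IsIdem f) :
    IsIdem (e * f) := by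
  set s := (e * f)⁻¹ with hs
  have h1 : f * s * e = (e * f)⁻¹ := by
    apply hS.inv_unique
    · have h := hS.mul_inv_mul (e * f)
      simp only [hS.mul_assoc] at h ⊢
      rw [idem_cancel hS hf, idem_cancel hS he, h]
    · have h := hS.inv_mul_inv (e * f)
      simp only [hS.mul_assoc] at h ⊢
      rw [idem_cancel hS he, idem_cancel hS hf]
      calc f * (s * (e * (f * (s * e)))) = f * ((s * (e * f) * s) * e) := by
            simp only [hS.mul_assoc]
        _ = f * (s * e) := by rw [hS.inv_mul_inv]
  have hsidem : IsIdem s := by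
    rw [hs, ← h1]
    show f * s * e * (f * s * e) = f * s * e
    calc f * s * e * (f * s * e) = f * ((s * (e * f)) * s * e) := by
          simp only [hS.mul_assoc]
      _ = f * (s * e) := by rw [hS.inv_mul_inv]
      _ = f * s * e := by rw [hS.mul_assoc]
  have : e * f = s⁻¹ := (inv_invol hS (e * f)).symm
  rw [this, idem_inv hS hsidem]
  exact hsidem

theorem idem_comm (hS : InvSemigroupZero S) {e f : S} (he : IsIdem e) (hf : IsIdem f) :
    e * f = f * e := by
  have hef := mul_idem hS he hf
  have hfe := mul_idem hS hf he
  have h1 : f * e = (e * f)⁻¹ := by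
    apply hS.inv_unique
    · simp only [hS.mul_assoc]
      rw [idem_cancel hS hf, idem_cancel hS he]
      rw [← hS.mul_assoc]; exact hef
    · simp only [hS.mul_assoc]
      rw [idem_cancel hS he, idem_cancel hS hf]
      rw [← hS.mul_assoc]; exact hfe
  rw [h1, idem_inv hS hef]

theorem idem_inv_mul (hS : InvSemigroupZero S) (a : S) : IsIdem (a⁻¹ * a) := by
  show a⁻¹ * a * (a⁻¹ * a) = a⁻¹ * a
  rw [← hS.mul_assoc, hS.inv_mul_inv]

theorem idem_mul_inv (hS : InvSemigroupZero S) (a : S) : IsIdem (a * a⁻¹) := by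
  show a * a⁻¹ * (a * a⁻¹) = a * a⁻¹
  rw [← hS.mul_assoc, hS.mul_inv_mul]

theorem conj_idem (hS : InvSemigroupZero S) {e : S} (he : IsIdem e) (a : S) :
    IsIdem (a * e * a⁻¹) := by
  show a * e * a⁻¹ * (a * e * a⁻¹) = a * e * a⁻¹
  have hcomm : e * (a⁻¹ * a) = a⁻¹ * a * e := idem_comm hS he (idem_inv_mul hS a)
  calc a * e * a⁻¹ * (a * e * a⁻¹) = a * (e * (a⁻¹ * a) * (e * a⁻¹)) := by
        simp only [hS.mul_assoc]
    _ = a * (a⁻¹ * a * e * (e * a⁻¹)) := by rw [hcomm]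
    _ = a * (a⁻¹ * (a * (e * (e * a⁻¹)))) := by simp only [hS.mul_assoc]
    _ = a * (e * (e * a⁻¹)) := mi_cancel hS a _
    _ = a * (e * a⁻¹) := by rw [idem_cancel hS he]
    _ = a * e * a⁻¹ := (hS.mul_assoc a e a⁻¹).symm

end ConjAux

namespace ConjAux
variable {S : Type*} [Mul S] [Inv S] [Zero S]

theorem swap_lemma (hS : InvSemigroupZero S) {f : S} (hf : IsIdem f) (a : S) :
    a⁻¹ * (a * (f * a⁻¹)) = f * a⁻¹ := by
  calc a⁻¹ * (a * (f * a⁻¹)) = a⁻¹ * a * f * a⁻¹ := by simp only [hS.mul_assoc]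
    _ = f * (a⁻¹ * a) * a⁻¹ := by rw [idem_comm hS (idem_inv_mul hS a) hf]
    _ = f * (a⁻¹ * a * a⁻¹) := by simp only [hS.mul_assoc]
    _ = f * a⁻¹ := by rw [hS.inv_mul_inv]

end ConjAux

open ConjAux in
theorem conjugate_cover' {S : Type*} [Mul S] [Inv S] [Zero S]
    (hS : InvSemigroupZero S) (e : S) (he : IsIdem e) (C : Finset S)
    (hCle : ∀ c ∈ C, IsIdem c ∧ (∃ f : S, IsIdem f ∧ c = e * f))
    (hcov : ∀ x : S, (∃ f : S, IsIdem f ∧ x = e * f) → x ≠ 0 → ∃ c ∈ C, x * c ≠ 0) (a : S) :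
    a * e * a⁻¹ = 0 ∨
      ((∀ c ∈ C, ∃ g : S, IsIdem g ∧ a * c * a⁻¹ = (a * e * a⁻¹) * g) ∧
        ∀ x : S, (∃ g : S, IsIdem g ∧ x = (a * e * a⁻¹) * g) → x ≠ 0 →
          ∃ c ∈ C, x * (a * c * a⁻¹) ≠ 0) := by
  right
  set t := a * e * a⁻¹ with ht
  have htid : IsIdem t := conj_idem hS he a
  constructor
  · intro c hc
    obtain ⟨hcid, f, hfid, hcef⟩ := hCle c hc
    refine ⟨a * f * a⁻¹, conj_idem hS hfid a, ?_⟩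
    calc a * c * a⁻¹ = a * (e * (f * a⁻¹)) := by
          rw [hcef]; simp only [hS.mul_assoc]
      _ = a * (e * (a⁻¹ * (a * (f * a⁻¹)))) := by rw [swap_lemma hS hfid]
      _ = (a * e * a⁻¹) * (a * f * a⁻¹) := by simp only [hS.mul_assoc]
  · rintro x ⟨g, hgid, hx⟩ hx0
    have hxid : IsIdem x := hx ▸ mul_idem hS htid hgid
    have htx : t * x = x := by
      rw [hx, ← hS.mul_assoc, htid]
    have hxt : x * t = x := by
      conv_lhs => rw [hx, idem_comm hS htid hgid]
      rw [hS.mul_assoc, htid, ← idem_comm hS htid hgid, ← hx]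
    have hax : a * a⁻¹ * x = x := by
      conv_lhs => rw [← htx, ht]
      calc a * a⁻¹ * (a * e * a⁻¹ * x) = a * (a⁻¹ * (a * (e * (a⁻¹ * x)))) := by
            simp only [hS.mul_assoc]
        _ = a * (e * (a⁻¹ * x)) := by rw [mi_cancel hS]
        _ = a * e * a⁻¹ * x := by simp only [hS.mul_assoc]
        _ = x := by rw [← ht, htx]
    have hxa : x * (a * a⁻¹) = x := by
      conv_lhs => rw [← hxt, ht]
      calc x * (a * e * a⁻¹) * (a * a⁻¹) = x * (a * (e * (a⁻¹ * (a * a⁻¹)))) := by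
            simp only [hS.mul_assoc]
        _ = x * (a * (e * a⁻¹)) := by
            rw [show a⁻¹ * (a * a⁻¹) = a⁻¹ by rw [← hS.mul_assoc, hS.inv_mul_inv]]
        _ = x * (a * e * a⁻¹) := by simp only [hS.mul_assoc]
        _ = x := by rw [← ht, hxt]
    set y := a⁻¹ * (x * a) with hy
    have hconj : a * (y * a⁻¹) = x := by
      calc a * (y * a⁻¹) = a * a⁻¹ * x * (a * a⁻¹) := by
            rw [hy]; simp only [hS.mul_assoc]
        _ = x * (a * a⁻¹) := by rw [hax]
        _ = x := hxa
    have hyid : IsIdem y := by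
      show y * y = y
      calc y * y = a⁻¹ * (x * (a * a⁻¹) * (x * a)) := by
            rw [hy]; simp only [hS.mul_assoc]
        _ = a⁻¹ * (x * (x * a)) := by rw [hxa]
        _ = a⁻¹ * (x * x * a) := by simp only [hS.mul_assoc]
        _ = y := by rw [hxid, hy]
    have hyaa : y * (a⁻¹ * a) = y := by
      calc y * (a⁻¹ * a) = a⁻¹ * (x * (a * a⁻¹ * a)) := by
            rw [hy]; simp only [hS.mul_assoc]
        _ = a⁻¹ * (x * a) := by rw [hS.mul_inv_mul]
        _ = y := hy.symm
    have hey : e * y = y := by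
      symm
      calc y = a⁻¹ * (x * a) := hy
        _ = a⁻¹ * ((t * x) * a) := by rw [htx]
        _ = a⁻¹ * a * e * (a⁻¹ * (x * a)) := by rw [ht]; simp only [hS.mul_assoc]
        _ = e * (a⁻¹ * a) * (a⁻¹ * (x * a)) := by
            rw [idem_comm hS (idem_inv_mul hS a) he]
        _ = e * (a⁻¹ * (a * (a⁻¹ * (x * a)))) := by simp only [hS.mul_assoc]
        _ = e * (a⁻¹ * (x * a)) := by rw [im_cancel hS]
        _ = e * y := by rw [← hy]
    have hy0 : y ≠ 0 := by
      intro h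
      apply hx0
      rw [← hconj, h, hS.zero_mul, hS.mul_zero]
    obtain ⟨c, hc, hyc⟩ := hcov y ⟨y, hyid, hey.symm⟩ hy0
    obtain ⟨hcid, -⟩ := hCle c hc
    refine ⟨c, hc, fun h0 => hyc ?_⟩
    have hkey : a⁻¹ * (x * (a * c * a⁻¹)) * a = y * c := by
      calc a⁻¹ * (x * (a * c * a⁻¹)) * a = y * c * (a⁻¹ * a) := by
            rw [hy]; simp only [hS.mul_assoc]
        _ = y * (a⁻¹ * a) * c := by
            rw [hS.mul_assoc, idem_comm hS hcid (idem_inv_mul hS a), ← hS.mul_assoc]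
        _ = y * c := by rw [hyaa]
    rw [← hkey, h0, hS.mul_zero, hS.zero_mul]

/-- If `{e₁,…,eₘ}` is a cover of the idempotent `e` (meets of idempotents are
products) and `a` is arbitrary, then either `a e a⁻¹ = 0` or
`{a e₁ a⁻¹, …, a eₘ a⁻¹}` is a cover of the idempotent `a e a⁻¹`. -/
theorem conjugate_cover {S : Type*} [Mul S] [Inv S] [Zero S]
    (hS : InvSemigroupZero S) (e : S) (he : IsIdem e) (C : Finset S)
    (hCle : ∀ c ∈ C, IsIdem c ∧ natLe c e)
    (hcov : ∀ x : S, natLe x e → x ≠ 0 → ∃ c ∈ C, x * c ≠ 0) (a : S) :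
    a * e * a⁻¹ = 0 ∨
      ((∀ c ∈ C, natLe (a * c * a⁻¹) (a * e * a⁻¹)) ∧
        ∀ x : S, natLe x (a * e * a⁻¹) → x ≠ 0 →
          ∃ c ∈ C, x * (a * c * a⁻¹) ≠ 0) := by
  exact conjugate_cover' hS e he C hCle hcov a
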